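/- For 0≤i≤d one has η*_i(A*) E_0 E*_0 = (ϕ_d ϕ_{d−1} ⋯ ϕ_{d−i+1} / η_d(θ_0)) · η_{d−i}(A) E*_0, where η_d(θ_0) = (θ_0−θ_d)(θ_0−θ_{d−1})⋯(θ_0−θ_1) is nonzero since θ_0,…,θ_d are mutually distinct. -/

import Mathlib

open Polynomial Matrix Finset

noncomputable section

/-- The lower bidiagonal matrix with diagonal entries `θ 0, …, θ d` and
subdiagonal entries `1`. -/
def matA {K : Type*} [Field K] (d : ℕ) (θ : ℕ → K) :
    Matrix (Fin (d + 1)) (Fin (d + 1)) K :=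
  Matrix.of fun i j =>
    if (i : ℕ) = (j : ℕ) then θ (i : ℕ)
    else if (i : ℕ) = (j : ℕ) + 1 then 1 else 0

/-- The upper bidiagonal matrix with diagonal entries `θs 0, …, θs d` and
superdiagonal entries `φ 1, …, φ d` (the `(i-1,i)`-entry is `φ i`). -/
def matAs {K : Type*} [Field K] (d : ℕ) (θs φ : ℕ → K) :
    Matrix (Fin (d + 1)) (Fin (d + 1)) K :=
  Matrix.of fun i j =>
    if (i : ℕ) = (j : ℕ) then θs (i : ℕ)
    else if (j : ℕ) = (i : ℕ) + 1 then φ (j : ℕ) else 0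

/-- The primitive idempotent `E_i = ∏_{j ≠ i} (M - θ_j I)/(θ_i - θ_j)` of a matrix `M`
with eigenvalues `θ 0, …, θ d`. -/
def primIdem {K : Type*} [Field K] (d : ℕ) (θ : ℕ → K)
    (M : Matrix (Fin (d + 1)) (Fin (d + 1)) K) (i : ℕ) :
    Matrix (Fin (d + 1)) (Fin (d + 1)) K :=
  Polynomial.aeval M (∏ j ∈ (Finset.range (d + 1)).erase i,
    (Polynomial.C ((θ i - θ j)⁻¹) * (Polynomial.X - Polynomial.C (θ j))))

/-- `τ_i(λ) = (λ - θ_0)(λ - θ_1)⋯(λ - θ_{i-1})`. -/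
def tauPoly {K : Type*} [Field K] (θ : ℕ → K) (i : ℕ) : Polynomial K :=
  ∏ k ∈ Finset.range i, (Polynomial.X - Polynomial.C (θ k))

/-- `η_i(λ) = (λ - θ_d)(λ - θ_{d-1})⋯(λ - θ_{d-i+1})`. -/
def etaPoly {K : Type*} [Field K] (d : ℕ) (θ : ℕ → K) (i : ℕ) : Polynomial K :=
  ∏ k ∈ Finset.range i, (Polynomial.X - Polynomial.C (θ (d - k)))

section helpers

variable {K : Type*} [Field K] {d : ℕ}

lemma aeval_sub_mulVec (M : Matrix (Fin (d+1)) (Fin (d+1)) K) (c : K) (x : Fin (d+1) → K) :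
    (Polynomial.aeval M (X - C c)).mulVec x = M.mulVec x - c • x := by
  simp [map_sub, aeval_X, aeval_C, Matrix.sub_mulVec, Algebra.algebraMap_eq_smul_one,
    Matrix.smul_mulVec, Matrix.one_mulVec]

/-- η_m(A) v_0 = v_m -/
lemma etaA_mulVec (θ : ℕ → K) (v : ℕ → Fin (d + 1) → K)
    (hv1 : ∀ i < d, (matA d θ).mulVec (v i) - θ (d - i) • v i = v (i + 1)) :
    ∀ m ≤ d, (Polynomial.aeval (matA d θ) (etaPoly d θ m)).mulVec (v 0) = v m := by
  intro m hm
  induction m with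
  | zero => simp [etaPoly, Matrix.one_mulVec]
  | succ n ih =>
    have hn : n ≤ d := by omega
    rw [etaPoly, Finset.prod_range_succ, mul_comm, _root_.map_mul, ← Matrix.mulVec_mulVec,
      show (Polynomial.aeval (matA d θ) (∏ k ∈ Finset.range n,
        (X - C (θ (d - k))))) = Polynomial.aeval (matA d θ) (etaPoly d θ n) from rfl,
      ih hn, aeval_sub_mulVec, hv1 n (by omega)]

/-- η*_i(A*) v_d = (∏ ϕ) v_{d-i} -/
lemma etaAs_mulVec (θs φ ϕ : ℕ → K) (v : ℕ → Fin (d + 1) → K)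
    (hv3 : ∀ i, 1 ≤ i → i ≤ d →
      (matAs d θs φ).mulVec (v i) - θs i • v i = ϕ i • v (i - 1)) :
    ∀ i ≤ d, (Polynomial.aeval (matAs d θs φ) (etaPoly d θs i)).mulVec (v d)
      = (∏ k ∈ Finset.Icc (d - i + 1) d, ϕ k) • v (d - i) := by
  intro i hi
  induction i with
  | zero =>
    have : Finset.Icc (d + 1) d = ∅ := by simp
    simp [etaPoly, Matrix.one_mulVec, this]
  | succ n ih =>
    have hn : n ≤ d := by omega
    rw [etaPoly, Finset.prod_range_succ, mul_comm, _root_.map_mul, ← Matrix.mulVec_mulVec,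
      show (Polynomial.aeval (matAs d θs φ) (∏ k ∈ Finset.range n,
        (X - C (θs (d - k))))) = Polynomial.aeval (matAs d θs φ) (etaPoly d θs n) from rfl,
      ih hn, aeval_sub_mulVec, Matrix.mulVec_smul, smul_comm (θs (d - n)), ← smul_sub,
      hv3 (d - n) (by omega) (by omega)]
    have h1 : d - n - 1 = d - (n + 1) := by omega
    have h2 : Finset.Icc (d - n) d = insert (d - n) (Finset.Icc (d - n + 1) d) := by
      ext x; simp [Finset.mem_Icc, Finset.mem_insert]; omega
    have h3 : d - (n + 1) + 1 = d - n := by omega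
    rw [h1, smul_smul, h3, h2, Finset.prod_insert (by simp), mul_comm]

/-- v_0 is an eigenvector: general product form -/
lemma eigen_prod_mulVec (θs φ : ℕ → K) (v : ℕ → Fin (d + 1) → K)
    (hv4 : (matAs d θs φ).mulVec (v 0) - θs 0 • v 0 = 0) (s : Finset ℕ) :
    (Polynomial.aeval (matAs d θs φ) (∏ k ∈ s, (X - C (θs k)))).mulVec (v 0)
      = (∏ k ∈ s, (θs 0 - θs k)) • v 0 := by
  classical
  induction s using Finset.induction with
  | empty => simp [Matrix.one_mulVec]
  | insert _ _ hx ih =>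
    rename_i a s
    rw [Finset.prod_insert hx, _root_.map_mul, ← Matrix.mulVec_mulVec, ih,
      Matrix.mulVec_smul, Finset.prod_insert hx, aeval_sub_mulVec]
    have hA : (matAs d θs φ).mulVec (v 0) = θs 0 • v 0 := by
      have := hv4; rwa [sub_eq_zero] at this
    rw [hA, ← sub_smul, smul_smul, mul_comm]

/-- stripping: (A*-θ*_1)…(A*-θ*_j) v_j = (∏ ϕ) v_0 -/
lemma strip_mulVec (θs φ ϕ : ℕ → K) (v : ℕ → Fin (d + 1) → K)
    (hv3 : ∀ i, 1 ≤ i → i ≤ d →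
      (matAs d θs φ).mulVec (v i) - θs i • v i = ϕ i • v (i - 1)) :
    ∀ j ≤ d, (Polynomial.aeval (matAs d θs φ) (∏ k ∈ Finset.Icc 1 j, (X - C (θs k)))).mulVec (v j)
      = (∏ k ∈ Finset.Icc 1 j, ϕ k) • v 0 := by
  intro j hj
  induction j with
  | zero => simp [Matrix.one_mulVec]
  | succ n ih =>
    have hins : Finset.Icc 1 (n + 1) = insert (n + 1) (Finset.Icc 1 n) := by
      ext x; simp [Finset.mem_Icc, Finset.mem_insert]; omega
    rw [hins, Finset.prod_insert (by simp), mul_comm, _root_.map_mul, ← Matrix.mulVec_mulVec,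
      aeval_sub_mulVec, hv3 (n + 1) (by omega) (by omega),
      Matrix.mulVec_smul, Finset.prod_insert (by simp)]
    have : n + 1 - 1 = n := rfl
    rw [this, ih (by omega), smul_smul, mul_comm]

end helpers

section helpers2

variable {K : Type*} [Field K] {d : ℕ}

lemma prod_range_sub_eq_Icc {M : Type*} [CommMonoid M] (d : ℕ) (f : ℕ → M) :
    ∏ k ∈ Finset.range d, f (d - k) = ∏ k ∈ Finset.Icc 1 d, f k := by
  apply Finset.prod_nbij' (fun k => d - k) (fun k => d - k) <;>
    simp +contextual [Finset.mem_Icc, Finset.mem_range] <;> omega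

lemma primIdem_zero_eq (θ : ℕ → K) (M : Matrix (Fin (d+1)) (Fin (d+1)) K) :
    primIdem d θ M 0 = (∏ k ∈ Finset.Icc 1 d, (θ 0 - θ k)⁻¹) •
      Polynomial.aeval M (∏ k ∈ Finset.Icc 1 d, (X - C (θ k))) := by
  unfold primIdem
  have h : (Finset.range (d+1)).erase 0 = Finset.Icc 1 d := by
    ext x; simp [Finset.mem_Icc]; omega
  rw [h, Finset.prod_mul_distrib, (map_prod (C : K →+* K[X]) _ _).symm, _root_.map_mul,
    aeval_C, ← Algebra.smul_def]

/-- E*_0 v_j = c_j v_0 -/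
lemma EsZero_mulVec (θs φ ϕ : ℕ → K) (v : ℕ → Fin (d + 1) → K)
    (hv3 : ∀ i, 1 ≤ i → i ≤ d →
      (matAs d θs φ).mulVec (v i) - θs i • v i = ϕ i • v (i - 1))
    (hv4 : (matAs d θs φ).mulVec (v 0) - θs 0 • v 0 = 0) :
    ∀ j ≤ d, (primIdem d θs (matAs d θs φ) 0).mulVec (v j)
      = ((∏ k ∈ Finset.Icc 1 d, (θs 0 - θs k)⁻¹) *
         ((∏ k ∈ Finset.Icc (j+1) d, (θs 0 - θs k)) * ∏ k ∈ Finset.Icc 1 j, ϕ k)) • v 0 := by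
  intro j hj
  have hsplit : Finset.Icc 1 d = Finset.Icc (j+1) d ∪ Finset.Icc 1 j := by
    ext x; simp [Finset.mem_Icc, Finset.mem_union]; omega
  have hdisj : Disjoint (Finset.Icc (j+1) d) (Finset.Icc 1 j) := by
    rw [Finset.disjoint_left]; intro a ha hb
    simp [Finset.mem_Icc] at ha hb; omega
  have hP : (∏ k ∈ Finset.Icc 1 d, (X - C (θs k)))
      = (∏ k ∈ Finset.Icc (j+1) d, (X - C (θs k))) * ∏ k ∈ Finset.Icc 1 j, (X - C (θs k)) := by
    rw [hsplit, Finset.prod_union hdisj]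
  rw [primIdem_zero_eq, Matrix.smul_mulVec, hP, _root_.map_mul, ← Matrix.mulVec_mulVec,
    strip_mulVec θs φ ϕ v hv3 j hj, Matrix.mulVec_smul,
    eigen_prod_mulVec θs φ v hv4, smul_smul, smul_smul, mul_assoc]
  congr 1
  ring

/-- E_0 v_0 = (η_d(θ_0))⁻¹ v_d -/
lemma EZero_mulVec (θ : ℕ → K) (v : ℕ → Fin (d + 1) → K)
    (hv1 : ∀ i < d, (matA d θ).mulVec (v i) - θ (d - i) • v i = v (i + 1)) :
    (primIdem d θ (matA d θ) 0).mulVec (v 0)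
      = ((etaPoly d θ d).eval (θ 0))⁻¹ • v d := by
  have hpoly : (∏ k ∈ Finset.Icc 1 d, (X - C (θ k))) = etaPoly d θ d := by
    rw [etaPoly, prod_range_sub_eq_Icc d (fun k => (X - C (θ k)))]
  have heval : (etaPoly d θ d).eval (θ 0) = ∏ k ∈ Finset.Icc 1 d, (θ 0 - θ k) := by
    rw [etaPoly]
    simp only [eval_prod, eval_sub, eval_X, eval_C]
    exact prod_range_sub_eq_Icc d (fun k => (θ 0 - θ k))
  rw [primIdem_zero_eq, hpoly, Matrix.smul_mulVec,
    etaA_mulVec θ v hv1 d le_rfl, heval, ← Finset.prod_inv_distrib]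

end helpers2

theorem etas_EZero_EsZero {K : Type*} [Field K] (d : ℕ) (θ θs φ ϕ : ℕ → K)
    (hθ : ∀ i ≤ d, ∀ j ≤ d, θ i = θ j → i = j)
    (hθs : ∀ i ≤ d, ∀ j ≤ d, θs i = θs j → i = j)
    (hφ : ∀ i, 1 ≤ i → i ≤ d → φ i ≠ 0)
    (hE0 : ∀ i ≤ d, ∀ j ≤ d, 1 < |(i : ℤ) - (j : ℤ)| →
      primIdem d θ (matA d θ) i * matAs d θs φ * primIdem d θ (matA d θ) j = 0)
    (hE1 : ∀ i ≤ d, ∀ j ≤ d, |(i : ℤ) - (j : ℤ)| = 1 →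
      primIdem d θ (matA d θ) i * matAs d θs φ * primIdem d θ (matA d θ) j ≠ 0)
    (hEs0 : ∀ i ≤ d, ∀ j ≤ d, 1 < |(i : ℤ) - (j : ℤ)| →
      primIdem d θs (matAs d θs φ) i * matA d θ * primIdem d θs (matAs d θs φ) j = 0)
    (hEs1 : ∀ i ≤ d, ∀ j ≤ d, |(i : ℤ) - (j : ℤ)| = 1 →
      primIdem d θs (matAs d θs φ) i * matA d θ * primIdem d θs (matAs d θs φ) j ≠ 0)
    (hϕ : ∀ i, 1 ≤ i → i ≤ d → ϕ i ≠ 0)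
    (v : ℕ → Fin (d + 1) → K)
    (hvli : LinearIndependent K fun i : Fin (d + 1) => v (i : ℕ))
    (hvsp : Submodule.span K (Set.range fun i : Fin (d + 1) => v (i : ℕ)) = ⊤)
    (hv1 : ∀ i < d, (matA d θ).mulVec (v i) - θ (d - i) • v i = v (i + 1))
    (hv2 : (matA d θ).mulVec (v d) - θ 0 • v d = 0)
    (hv3 : ∀ i, 1 ≤ i → i ≤ d →
      (matAs d θs φ).mulVec (v i) - θs i • v i = ϕ i • v (i - 1))
    (hv4 : (matAs d θs φ).mulVec (v 0) - θs 0 • v 0 = 0) :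
    ∀ i ≤ d,
      Polynomial.aeval (matAs d θs φ) (etaPoly d θs (i)) * primIdem d θ (matA d θ) 0 * primIdem d θs (matAs d θs φ) 0 = ((∏ k ∈ Finset.Icc (d - i + 1) (d), ϕ k) / (etaPoly d θ d).eval (θ 0)) • (Polynomial.aeval (matA d θ) (etaPoly d θ (d - i)) * primIdem d θs (matAs d θs φ) 0) := by
  intro i hi
  apply Matrix.toLin'.injective
  apply LinearMap.ext_on hvsp
  rintro x ⟨j, rfl⟩
  simp only [Matrix.toLin'_apply, _root_.map_smul, LinearMap.smul_apply]
  have hj : (j : ℕ) ≤ d := by omega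
  rw [mul_assoc, ← Matrix.mulVec_mulVec, ← Matrix.mulVec_mulVec,
    EsZero_mulVec θs φ ϕ v hv3 hv4 j hj]
  simp only [Matrix.mulVec_smul, Matrix.smul_mulVec]
  rw [EZero_mulVec θ v hv1]
  simp only [Matrix.mulVec_smul]
  rw [etaAs_mulVec θs φ ϕ v hv3 i hi]
  rw [← Matrix.mulVec_mulVec, EsZero_mulVec θs φ ϕ v hv3 hv4 j hj]
  simp only [Matrix.mulVec_smul, smul_smul]
  rw [etaA_mulVec θ v hv1 (d - i) (by omega)]
  congr 1
  rw [div_eq_mul_inv]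
  ring
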